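/- Let α be irrational with continued-fraction convergents p_n/q_n. Let q ≥ 0 be an integer, p ∈ ℤ, and n ≥ 0. If qα − p lies strictly between q_nα − p_n and q_{n+1}α − p_{n+1}, then either q ≥ q_n + q_{n+1} or p = q = 0. -/

import Mathlib

/-- Gauss map iterates of `α`: `x₀ = {α}`, `x_{n+1} = {1/x_n}`. -/
noncomputable def gaussIter (α : ℝ) : ℕ → ℝ
  | 0 => Int.fract α
  | n + 1 => Int.fract (gaussIter α n)⁻¹

/-- `cfa α n` is the partial quotient `a_{n+1} = ⌊1/x_n⌋` of the continued fraction of `α`. -/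
noncomputable def cfa (α : ℝ) (n : ℕ) : ℕ := ⌊(gaussIter α n)⁻¹⌋₊

/-- Denominators `q_n` of the continued fraction convergents of `α`:
`q₀ = 1`, `q₁ = a₁`, `q_{n+2} = a_{n+2} q_{n+1} + q_n`. -/
noncomputable def cfq (α : ℝ) : ℕ → ℕ
  | 0 => 1
  | 1 => cfa α 0
  | n + 2 => cfa α (n + 1) * cfq α (n + 1) + cfq α n

/-- Numerators `p_n` of the continued fraction convergents of `α`:
`p₀ = ⌊α⌋`, `p₁ = a₁⌊α⌋ + 1`, `p_{n+2} = a_{n+2} p_{n+1} + p_n`. -/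
noncomputable def cfp (α : ℝ) : ℕ → ℤ
  | 0 => ⌊α⌋
  | 1 => cfa α 0 * ⌊α⌋ + 1
  | n + 2 => cfa α (n + 1) * cfp α (n + 1) + cfp α n

/-- `z_n = q_n α - p_n`. -/
noncomputable def cfz (α : ℝ) (n : ℕ) : ℝ := (cfq α n : ℝ) * α - (cfp α n : ℝ)

lemma irrational_fract {x : ℝ} (h : Irrational x) : Irrational (Int.fract x) := by
  rw [Int.fract]
  exact h.sub_intCast _

lemma gaussIter_irrational {α : ℝ} (hα : Irrational α) (n : ℕ) :
    Irrational (gaussIter α n) := by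
  induction n with
  | zero => exact irrational_fract hα
  | succ n ih => exact irrational_fract ih.inv

lemma gaussIter_pos {α : ℝ} (hα : Irrational α) (n : ℕ) : 0 < gaussIter α n := by
  have h := (gaussIter_irrational hα n).ne_zero
  have h2 : 0 ≤ gaussIter α n := by
    cases n with
    | zero => exact Int.fract_nonneg _
    | succ n => exact Int.fract_nonneg _
  exact lt_of_le_of_ne h2 (Ne.symm h)

lemma gaussIter_lt_one {α : ℝ} (n : ℕ) : gaussIter α n < 1 := by
  cases n with
  | zero => exact Int.fract_lt_one _
  | succ n => exact Int.fract_lt_one _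

lemma one_lt_inv_gaussIter {α : ℝ} (hα : Irrational α) (n : ℕ) :
    1 < (gaussIter α n)⁻¹ :=
  (one_lt_inv₀ (gaussIter_pos hα n)).mpr (gaussIter_lt_one n)

lemma cfa_eq {α : ℝ} (hα : Irrational α) (n : ℕ) :
    (cfa α n : ℝ) = (gaussIter α n)⁻¹ - gaussIter α (n + 1) := by
  have h0 : (0:ℝ) ≤ (gaussIter α n)⁻¹ := le_of_lt (inv_pos.mpr (gaussIter_pos hα n))
  rw [cfa, natCast_floor_eq_intCast_floor h0]
  show ((⌊(gaussIter α n)⁻¹⌋ : ℝ)) = _ - Int.fract (gaussIter α n)⁻¹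
  rw [Int.fract]; ring
  
lemma one_le_cfa {α : ℝ} (hα : Irrational α) (n : ℕ) : 1 ≤ cfa α n :=
  Nat.le_floor (le_of_lt (by exact_mod_cast one_lt_inv_gaussIter hα n))

lemma one_le_cfq {α : ℝ} (hα : Irrational α) (n : ℕ) : 1 ≤ cfq α n := by
  induction n using Nat.strong_induction_on with
  | _ n ih =>
    match n with
    | 0 => exact le_refl _
    | 1 => exact one_le_cfa hα 0
    | (m+2) =>
      have := ih m (by omega)
      simp only [cfq]
      omega

lemma one_le_cfq' {α : ℝ} (hα : Irrational α) (n : ℕ) : (1:ℤ) ≤ (cfq α n : ℤ) := by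
  exact_mod_cast one_le_cfq hα n

lemma cfz_rec {α : ℝ} (n : ℕ) :
    cfz α (n + 2) = (cfa α (n + 1) : ℝ) * cfz α (n + 1) + cfz α n := by
  simp only [cfz, cfq, cfp]
  push_cast
  ring

lemma cfz_prod {α : ℝ} (hα : Irrational α) (n : ℕ) :
    cfz α n = (-1:ℝ)^n * ∏ k ∈ Finset.range (n+1), gaussIter α k := by
  induction n using Nat.strong_induction_on with
  | _ n ih =>
    match n with
    | 0 =>
      have h1 : cfq α 0 = 1 := rfl
      have h2 : cfp α 0 = ⌊α⌋ := rfl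
      have h3 : gaussIter α 0 = Int.fract α := rfl
      show (cfq α 0 : ℝ) * α - (cfp α 0 : ℝ) = _
      rw [h1, h2, Finset.prod_range_one, h3, Int.fract]
      push_cast
      ring
    | 1 =>
      have h0 := (gaussIter_pos hα 0).ne'
      have ha := cfa_eq hα 0
      have hx : (α : ℝ) = gaussIter α 0 + (⌊α⌋ : ℝ) := by
        show α = Int.fract α + (⌊α⌋:ℝ)
        rw [Int.fract]; ring
      have hfract : gaussIter α 0 = α - (⌊α⌋ : ℝ) := by
        show Int.fract α = _
        rw [Int.fract]
      have hinv : (gaussIter α 0)⁻¹ * gaussIter α 0 = 1 := inv_mul_cancel₀ h0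
      norm_num at ha
      show (cfq α 1 : ℝ) * α - (cfp α 1 : ℝ) = _
      simp only [cfq, cfp, Finset.prod_range_succ, Finset.prod_range_one, pow_one]
      push_cast
      rw [ha]
      linear_combination (-((gaussIter α 0)⁻¹ - gaussIter α 1)) * hfract + hinv
    | (m+2) =>
      have i1 := ih m (by omega)
      have i2 := ih (m+1) (by omega)
      have ha := cfa_eq hα (m+1)
      have h0 := (gaussIter_pos hα (m+1)).ne'
      rw [cfz_rec, i1, i2, ha, Finset.prod_range_succ (f := gaussIter α) (n := m+2),
        Finset.prod_range_succ (f := gaussIter α) (n := m+1)]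
      have hinv : (gaussIter α (m+1))⁻¹ * gaussIter α (m+1) = 1 := inv_mul_cancel₀ h0
      field_simp
      ring

lemma cfz_mul_neg {α : ℝ} (hα : Irrational α) (n : ℕ) :
    cfz α n * cfz α (n + 1) < 0 := by
  rw [cfz_prod hα n, cfz_prod hα (n+1),
    Finset.prod_range_succ (f := gaussIter α) (n := n+1)]
  set P := ∏ k ∈ Finset.range (n+1), gaussIter α k with hP
  set x := gaussIter α (n+1) with hxdef
  have hPpos : 0 < P := Finset.prod_pos fun k _ => gaussIter_pos hα k
  have hxpos : 0 < x := gaussIter_pos hα (n+1)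
  set e := (-1:ℝ)^n with he'
  have he : e * e = 1 := by
    rw [he', ← pow_add]
    exact Even.neg_one_pow ⟨n, rfl⟩
  have key : (e * P) * ((-1:ℝ)^(n+1) * (P * x)) = -(P * P * x) := by
    rw [pow_succ, ← he']
    linear_combination (-(P * P * x)) * he
  rw [key]
  have : 0 < P * P * x := by positivity
  linarith

lemma cf_det {α : ℝ} (n : ℕ) :
    cfp α (n+1) * (cfq α n : ℤ) - cfp α n * (cfq α (n+1) : ℤ) = (-1)^n := by
  induction n with
  | zero =>
    simp only [cfp, cfq, pow_zero]
    push_cast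
    ring
  | succ m ih =>
    show cfp α (m+2) * (cfq α (m+1) : ℤ) - cfp α (m+1) * (cfq α (m+2) : ℤ) = _
    simp only [cfp, cfq]
    push_cast
    linear_combination (-1 : ℤ) * ih

lemma bezout {P0 P1 Q0 Q1 e p q : ℤ} (hdet : P1 * Q0 - P0 * Q1 = e) (he : e * e = 1) :
    ∃ a b : ℤ, q = a * Q0 + b * Q1 ∧ p = a * P0 + b * P1 := by
  refine ⟨-e * (p * Q1 - q * P1), e * (p * Q0 - q * P0), ?_, ?_⟩
  · linear_combination (-(e*q)) * hdet + (-q) * he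
  · linear_combination (-(e*p)) * hdet + (-p) * he


/-- If `qα - p` lies strictly between the consecutive best approximations `q_n α - p_n` and
`q_{n+1} α - p_{n+1}`, then either `q ≥ q_n + q_{n+1}` or `p = q = 0`. -/
theorem statement9 (α : ℝ) (hα : Irrational α) (n : ℕ) (q : ℕ) (p : ℤ)
    (h₁ : min (cfz α n) (cfz α (n + 1)) < (q : ℝ) * α - (p : ℝ))
    (h₂ : (q : ℝ) * α - (p : ℝ) < max (cfz α n) (cfz α (n + 1))) :
    cfq α n + cfq α (n + 1) ≤ q ∨ (p = 0 ∧ q = 0) := by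
  have he : ((-1:ℤ)^n) * ((-1:ℤ)^n) = 1 := by
    rw [← pow_add]; exact Even.neg_one_pow ⟨n, rfl⟩
  obtain ⟨a, b, hq, hp⟩ := bezout (p := p) (q := (q:ℤ)) (cf_det (α := α) n) he
  have hQ0 := one_le_cfq' hα n
  have hQ1 := one_le_cfq' hα (n+1)
  have hq' : (q : ℝ) = (a:ℝ) * (cfq α n : ℝ) + (b:ℝ) * (cfq α (n+1) : ℝ) := by
    exact_mod_cast congrArg (Int.cast : ℤ → ℝ) hq
  have hp' : (p : ℝ) = (a:ℝ) * (cfp α n : ℝ) + (b:ℝ) * (cfp α (n+1) : ℝ) := by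
    exact_mod_cast congrArg (Int.cast : ℤ → ℝ) hp
  have hz : (q : ℝ) * α - (p : ℝ) = (a:ℝ) * cfz α n + (b:ℝ) * cfz α (n+1) := by
    simp only [cfz]
    rw [hq', hp']
    ring
  set u := cfz α n with hu'
  set v := cfz α (n+1) with hv'
  have huv := cfz_mul_neg hα n
  rw [← hu', ← hv'] at huv
  rcases le_or_gt a 0 with ha0 | ha0 <;> rcases le_or_gt b 0 with hb0 | hb0
  · -- a ≤ 0, b ≤ 0 : p = q = 0
    right
    have h1 : a * (cfq α n : ℤ) ≤ a := by nlinarith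
    have h2 : b * (cfq α (n+1) : ℤ) ≤ b := by nlinarith
    have hq0 : (0:ℤ) ≤ (q:ℤ) := Int.natCast_nonneg q
    have haz : a = 0 := le_antisymm ha0 (by linarith [hq.symm.le])
    have hbz : b = 0 := le_antisymm hb0 (by linarith [hq.symm.le])
    constructor
    · rw [hp, haz, hbz]; ring
    · have : (q:ℤ) = 0 := by rw [hq, haz, hbz]; ring
      exact_mod_cast this
  · -- a ≤ 0, b ≥ 1 : contradiction
    exfalso
    have ha1 : (a:ℝ) ≤ 0 := by exact_mod_cast ha0
    have hb1 : (1:ℝ) ≤ (b:ℝ) := by exact_mod_cast hb0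
    rcases mul_neg_iff.mp huv with ⟨hu, hv⟩ | ⟨hu, hv⟩
    · -- u > 0, v < 0 : a u + b v ≤ v, contradicts min < qα - p
      have hm : min u v = v := min_eq_right (le_of_lt (hv.trans hu))
      rw [hm, hz] at h₁
      nlinarith
    · -- u < 0, v > 0 : a u + b v ≥ v, contradicts qα - p < max
      have hm : max u v = v := max_eq_right (le_of_lt (hu.trans hv))
      rw [hm, hz] at h₂
      nlinarith
  · -- a ≥ 1, b ≤ 0 : contradiction
    exfalso
    have ha1 : (1:ℝ) ≤ (a:ℝ) := by exact_mod_cast ha0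
    have hb1 : (b:ℝ) ≤ 0 := by exact_mod_cast hb0
    rcases mul_neg_iff.mp huv with ⟨hu, hv⟩ | ⟨hu, hv⟩
    · -- u > 0, v < 0 : a u + b v ≥ u, contradicts qα - p < max
      have hm : max u v = u := max_eq_left (le_of_lt (hv.trans hu))
      rw [hm, hz] at h₂
      nlinarith
    · -- u < 0, v > 0 : a u + b v ≤ u, contradicts min < qα - p
      have hm : min u v = u := min_eq_left (le_of_lt (hu.trans hv))
      rw [hm, hz] at h₁
      nlinarith
  · -- a ≥ 1, b ≥ 1
    left
    have : (cfq α n : ℤ) + (cfq α (n+1) : ℤ) ≤ (q:ℤ) := by nlinarith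
    exact_mod_cast this
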